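/- Let F be a field of characteristic zero, λ ∈ F nonzero. Every solution a ∈ F(x) of x·a' = λ·a with a ≠ 0 satisfies: λ is an integer n ≥ 0 or n < 0 and a = c·x^n for some nonzero c ∈ F; in particular if λ ∉ ℤ there is no nonzero rational solution. -/

import Mathlib

open Polynomial

/-- Coefficientwise analysis of the polynomial Euler equation. -/
lemma euler_poly_monomial {F : Type*} [Field F] [CharZero F] (p : F[X]) (hp : p ≠ 0) (e : F)
    (h : Polynomial.X * Polynomial.derivative p = Polynomial.C e * p) :
    ∃ k : ℕ, (k : F) = e ∧ p = Polynomial.C (p.coeff k) * Polynomial.X ^ k := by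
  have hco : ∀ j : ℕ, (j : F) * p.coeff j = e * p.coeff j := by
    intro j
    have := congrArg (fun q => Polynomial.coeff q j) h
    simp only [coeff_C_mul] at this
    cases j with
    | zero =>
      simp only [coeff_X_mul_zero] at this  -- maybe wrong name
      simp [← this]
    | succ i =>
      rw [coeff_X_mul, coeff_derivative] at this
      push_cast
      rw [mul_comm]
      exact this
  refine ⟨p.natDegree, ?_, ?_⟩
  · have hc := hco p.natDegree
    have hcn : p.coeff p.natDegree ≠ 0 := by
      simpa using Polynomial.leadingCoeff_ne_zero.mpr hp
    exact mul_right_cancel₀ hcn hc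
  · ext j
    rw [coeff_C_mul, coeff_X_pow]
    by_cases hj : j = p.natDegree
    · simp [hj]
    · simp only [hj, if_false, mul_zero]
      by_contra hne
      have hj' : (j : F) = e := mul_right_cancel₀ hne (hco j)
      have hk : ((p.natDegree : ℕ) : F) = e := by
        have hcn : p.coeff p.natDegree ≠ 0 := by
          simpa using Polynomial.leadingCoeff_ne_zero.mpr hp
        exact mul_right_cancel₀ hcn (hco p.natDegree)
      exact hj (Nat.cast_injective (hj'.trans hk.symm))

/-- If `q ∣ X q'` then `X q' = C e q` for some `e`. -/
lemma euler_dvd_aux {F : Type*} [Field F] [CharZero F] (q : F[X]) (hq : q ≠ 0)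
    (h : q ∣ Polynomial.X * Polynomial.derivative q) :
    ∃ e : F, Polynomial.X * Polynomial.derivative q = Polynomial.C e * q := by
  by_cases h0 : Polynomial.X * Polynomial.derivative q = 0
  · exact ⟨0, by simp [h0]⟩
  obtain ⟨r, hr⟩ := h
  have hq' : Polynomial.derivative q ≠ 0 := fun hc => h0 (by simp [hc])
  have hqd : q.natDegree ≠ 0 := fun hc => by
    rw [Polynomial.eq_C_of_natDegree_eq_zero hc] at hq'; simp at hq'
  have hdeg : (Polynomial.X * Polynomial.derivative q).natDegree ≤ q.natDegree := by
    rw [Polynomial.natDegree_mul Polynomial.X_ne_zero hq', Polynomial.natDegree_X]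
    have := Polynomial.natDegree_derivative_lt hqd
    omega
  have hr0 : r ≠ 0 := fun hc => h0 (by simp [hr, hc])
  have : r.natDegree = 0 := by
    rw [hr, Polynomial.natDegree_mul hq hr0] at hdeg
    omega
  exact ⟨r.coeff 0, by rw [hr, ← Polynomial.eq_C_of_natDegree_eq_zero this, mul_comm]⟩

/-- The derivation with `d X = 1` agrees with polynomial differentiation. -/
lemma d_algebraMap {F : Type*} [Field F]
    (d : Derivation F (RatFunc F) (RatFunc F)) (hd : d RatFunc.X = 1) (p : F[X]) :
    d (algebraMap F[X] (RatFunc F) p) = algebraMap F[X] (RatFunc F) (Polynomial.derivative p) := by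
  induction p using Polynomial.induction_on' with
  | add p q hp hq => rw [map_add, map_add, hp, hq, ← map_add, ← Polynomial.derivative_add]
  | monomial n c =>
    rw [← Polynomial.C_mul_X_pow_eq_monomial, Polynomial.derivative_C_mul, Polynomial.derivative_X_pow]
    have hC : algebraMap F[X] (RatFunc F) (Polynomial.C c) = algebraMap F (RatFunc F) c := by
      rw [RatFunc.algebraMap_C]; rfl
    rw [map_mul, Derivation.leibniz, hC, Derivation.map_algebraMap, smul_zero, add_zero]
    rw [map_pow, RatFunc.algebraMap_X, Derivation.leibniz_pow, hd]
    have hn : algebraMap F[X] (RatFunc F) (Polynomial.C (n : F)) = (n : RatFunc F) := by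
      rw [RatFunc.algebraMap_C]; simp
    rw [map_mul, map_mul, map_pow, RatFunc.algebraMap_X, hn, hC]
    simp only [smul_eq_mul, Algebra.smul_def, nsmul_eq_mul, mul_one]

/-- Every nonzero rational solution of the Euler equation `x a' = λ a` forces `λ`
to be an integer `n` and `a = c·xⁿ` for some nonzero `c ∈ F`; in particular if
`λ ∉ ℤ` there is no nonzero rational solution. -/
theorem euler_equation_rational_solutions
    (F : Type*) [Field F] [CharZero F]
    (d : Derivation F (RatFunc F) (RatFunc F)) (hd : d RatFunc.X = 1)
    (l : F) (hl : l ≠ 0) (a : RatFunc F) (ha : a ≠ 0)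
    (heq : RatFunc.X * d a = RatFunc.C l * a) :
    ∃ n : ℤ, (n : F) = l ∧ ∃ c : F, c ≠ 0 ∧ a = RatFunc.C c * RatFunc.X ^ n := by
  classical
  set P := a.num with hPdef
  set Q := a.denom with hQdef
  have hP : P ≠ 0 := RatFunc.num_ne_zero ha
  have hQ : Q ≠ 0 := RatFunc.denom_ne_zero a
  have hQf : (algebraMap F[X] (RatFunc F)) Q ≠ 0 := by
    simpa using hQ
  have ha' : a * algebraMap F[X] (RatFunc F) Q = algebraMap F[X] (RatFunc F) P := by
    rw [← RatFunc.num_div_denom a]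
    exact div_mul_cancel₀ _ hQf
  have hda : a * algebraMap F[X] (RatFunc F) (Polynomial.derivative Q)
      + algebraMap F[X] (RatFunc F) Q * d a
      = algebraMap F[X] (RatFunc F) (Polynomial.derivative P) := by
    have h1 := congrArg d ha'
    rw [Derivation.leibniz, d_algebraMap d hd, d_algebraMap d hd] at h1
    simpa [smul_eq_mul] using h1
  have key2 : RatFunc.X * (algebraMap F[X] (RatFunc F) (Polynomial.derivative P)
        * algebraMap F[X] (RatFunc F) Q
      - algebraMap F[X] (RatFunc F) P * algebraMap F[X] (RatFunc F) (Polynomial.derivative Q))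
      = RatFunc.C l * (algebraMap F[X] (RatFunc F) P * algebraMap F[X] (RatFunc F) Q) := by
    rw [← ha', ← hda]
    linear_combination (algebraMap F[X] (RatFunc F) Q)^2 * heq
  have key : Polynomial.X * (Polynomial.derivative P * Q - P * Polynomial.derivative Q)
      = Polynomial.C l * (P * Q) := by
    apply RatFunc.algebraMap_injective F
    simpa only [map_mul, map_sub, RatFunc.algebraMap_X, RatFunc.algebraMap_C] using key2
  have hcop : IsCoprime P Q := RatFunc.isCoprime_num_denom a
  have hQdvd : Q ∣ Polynomial.X * Polynomial.derivative Q * P :=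
    ⟨Polynomial.X * Polynomial.derivative P - Polynomial.C l * P, by linear_combination -key⟩
  have hQX : Q ∣ Polynomial.X * Polynomial.derivative Q :=
    hcop.symm.dvd_of_dvd_mul_right hQdvd
  obtain ⟨e2, he2⟩ := euler_dvd_aux Q hQ hQX
  obtain ⟨m, hm, hQeq⟩ := euler_poly_monomial Q hQ e2 he2
  have hPdvd : P ∣ Polynomial.X * Polynomial.derivative P * Q :=
    ⟨Polynomial.C l * Q + Polynomial.X * Polynomial.derivative Q, by linear_combination key⟩
  have hPX : P ∣ Polynomial.X * Polynomial.derivative P :=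
    hcop.dvd_of_dvd_mul_right hPdvd
  obtain ⟨e1, he1⟩ := euler_dvd_aux P hP hPX
  obtain ⟨k, hk, hPeq⟩ := euler_poly_monomial P hP e1 he1
  rw [← hk] at he1
  rw [← hm] at he2
  have h4 : (Polynomial.C ((k : F) - (m : F) - l)) * (P * Q) = 0 := by
    rw [map_sub, map_sub]
    linear_combination key - Q * he1 + P * he2
  have h5 : (k : F) - (m : F) - l = 0 := by
    rcases mul_eq_zero.mp h4 with h | h
    · exact Polynomial.C_eq_zero.mp h
    · exact absurd h (mul_ne_zero hP hQ)
  have hl2 : (k : F) - (m : F) = l := by linear_combination h5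
  have hpc : P.coeff k ≠ 0 := fun hc => hP (by rw [hPeq, hc, map_zero, zero_mul])
  have hqc : Q.coeff m ≠ 0 := fun hc => hQ (by rw [hQeq, hc, map_zero, zero_mul])
  refine ⟨(k : ℤ) - (m : ℤ), by push_cast; exact hl2, P.coeff k / Q.coeff m,
    div_ne_zero hpc hqc, ?_⟩
  have hX0 : (RatFunc.X : RatFunc F) ≠ 0 := RatFunc.X_ne_zero
  rw [← RatFunc.num_div_denom a, ← hPdef, ← hQdef, hPeq, hQeq]
  rw [zpow_sub₀ hX0, zpow_natCast, zpow_natCast]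
  rw [map_mul, map_mul, map_pow, map_pow, RatFunc.algebraMap_X, RatFunc.algebraMap_C,
    RatFunc.algebraMap_C, map_div₀]
  have hCqc : RatFunc.C (Q.coeff m) ≠ 0 := by
    simpa using hqc
  simp only [Polynomial.coeff_C_mul, Polynomial.coeff_X_pow_self, mul_one]
  field_simp
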